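/- Let T be a measurable, μ-almost surely ℤ²-periodic, Lebesgue-measure-preserving map of the plane whose induced system T̄ on the torus ℝ²/ℤ² is totally ergodic (all powers T̄^k, k ≥ 1, are ergodic for Lebesgue measure on the torus), and suppose there exists an exchange of pieces conjugate to T. Then for every exchange of pieces R conjugate to T the complexity function p_R is strictly increasing; consequently the complexity function associated to T is well defined, strictly increasing, and satisfies p^T(n) ≥ n+1 for every integer n ≥ 1. -/

import Mathlib

open MeasureTheory Filter Topology

noncomputable section

/-- The inclusion of `ℤ × ℤ` into `ℝ × ℝ`. -/
def latVec (v : ℤ × ℤ) : ℝ × ℝ := ((v.1 : ℝ), (v.2 : ℝ))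

/-- An exchange of `m` pieces of the plane adapted to a measurable map `T` of the plane:
measurable pieces `D i`, pairwise almost disjoint, whose union has Lebesgue measure 1 and is
almost surely a fundamental domain for `ℤ²`, together with integer vectors `vec i` and the
exchange map `R` acting on the union of the pieces by `R x = T x - vec i` for `x ∈ D i`,
preserving Lebesgue measure.  `C` is the coding map: `C x k` records the piece containing
`R^[k] x`. -/
structure PieceExchange (T : ℝ × ℝ → ℝ × ℝ) (m : ℕ) where
  D : Fin m → Set (ℝ × ℝ)
  vec : Fin m → ℤ × ℤ
  R : ℝ × ℝ → ℝ × ℝ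
  C : ℝ × ℝ → ℕ → Fin m
  measD : ∀ i, MeasurableSet (D i)
  aeDisjoint : ∀ i j, i ≠ j → volume (D i ∩ D j) = 0
  measure_union : volume (⋃ i, D i) = 1
  fundamental :
    volume {x | x ∈ ⋃ i, D i ∧ ∃ y ∈ ⋃ i, D i, y ≠ x ∧ ∃ a b : ℤ, x - y = ((a : ℝ), (b : ℝ))} = 0
  measR : Measurable R
  measC : Measurable C
  mem_code : ∀ x ∈ ⋃ i, D i, ∀ k : ℕ, R^[k] x ∈ D (C x k)
  R_eq : ∀ x ∈ ⋃ i, D i, ∀ k : ℕ, R (R^[k] x) = T (R^[k] x) - latVec (vec (C x k))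
  meas_pres : ∀ A : Set (ℝ × ℝ), MeasurableSet A →
    volume ((⋃ i, D i) ∩ R ⁻¹' A) = volume ((⋃ i, D i) ∩ A)

namespace PieceExchange

variable {T : ℝ × ℝ → ℝ × ℝ} {m : ℕ}

/-- The domain of the exchange: the union of the pieces. -/
def domain (E : PieceExchange T m) : Set (ℝ × ℝ) := ⋃ i, E.D i

/-- The exchange is conjugate to `T` when the coding map is injective off a Lebesgue-null set. -/
def Conjugate (E : PieceExchange T m) : Prop :=
  volume {x | x ∈ E.domain ∧ ∃ y ∈ E.domain, y ≠ x ∧ E.C y = E.C x} = 0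

/-- The language of the exchange: all finite factors of coding sequences. -/
def lang (E : PieceExchange T m) : Set (List (Fin m)) :=
  {w | ∃ n k : ℕ, ∃ x ∈ E.domain, w = (List.range n).map fun j => E.C x (k + j)}

/-- The complexity of the exchange: the number of words of length `n` in its language. -/
def complexity (E : PieceExchange T m) (n : ℕ) : ℕ :=
  Nat.card {w : List (Fin m) // w ∈ E.lang ∧ w.length = n}

end PieceExchange

/-- The complexity function associated to `T`: the infimum of the complexities of the
exchanges of pieces conjugate to `T` (`⊤` if there is no such exchange). -/
def complexityFn (T : ℝ × ℝ → ℝ × ℝ) (n : ℕ) : ℕ∞ :=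
  ⨅ (m : ℕ) (E : PieceExchange T m) (_ : E.Conjugate), (E.complexity n : ℕ∞)


/-- The torus `ℝ²/ℤ²`. -/
abbrev Torus := AddCircle (1 : ℝ) × AddCircle (1 : ℝ)

/-- The canonical projection `ℝ² → ℝ²/ℤ²`. -/
def torusProj : ℝ × ℝ → Torus := fun x => ((x.1 : AddCircle (1 : ℝ)), (x.2 : AddCircle (1 : ℝ)))

namespace PieceExchange

variable {T : ℝ × ℝ → ℝ × ℝ} {m : ℕ}

/-- The window of length `n` of the coding of `x` starting at time `k`. -/
def window (E : PieceExchange T m) (x : ℝ × ℝ) (k n : ℕ) : List (Fin m) :=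
  (List.range n).map fun j => E.C x (k + j)

lemma window_mem (E : PieceExchange T m) {x : ℝ × ℝ} (hx : x ∈ E.domain) (k n : ℕ) :
    E.window x k n ∈ E.lang := ⟨n, k, x, hx, rfl⟩

lemma window_length (E : PieceExchange T m) (x : ℝ × ℝ) (k n : ℕ) :
    (E.window x k n).length = n := by simp [window]

lemma window_take (E : PieceExchange T m) (x : ℝ × ℝ) (k n : ℕ) :
    (E.window x k (n + 1)).take n = E.window x k n := by
  unfold window
  rw [← List.map_take, List.take_range]
  simp

lemma finite_words (E : PieceExchange T m) (n : ℕ) :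
    Finite {w : List (Fin m) // w ∈ E.lang ∧ w.length = n} := by
  have : {w : List (Fin m) | w ∈ E.lang ∧ w.length = n}.Finite :=
    Set.Finite.subset (List.finite_length_eq (Fin m) n) fun w hw => hw.2
  exact this.to_subtype

lemma word_eq_window (E : PieceExchange T m) {w : List (Fin m)} (hw : w ∈ E.lang) :
    ∃ k x, x ∈ E.domain ∧ w = E.window x k w.length := by
  obtain ⟨N, k, x, hx, rfl⟩ := hw
  exact ⟨k, x, hx, by simp [window]⟩

/-- Complexity of a conjugate exchange strictly increases at every step. -/
lemma complexity_lt (E : PieceExchange T m) (hconj : E.Conjugate) (n : ℕ) :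
    E.complexity n < E.complexity (n + 1) := by
  classical
  haveI := E.finite_words n
  haveI := E.finite_words (n + 1)
  -- the prefix map from words of length `n+1` to words of length `n`
  have Φmem : ∀ u : {w : List (Fin m) // w ∈ E.lang ∧ w.length = n + 1},
      u.val.take n ∈ E.lang ∧ (u.val.take n).length = n := by
    rintro ⟨w, hw, hlen⟩
    obtain ⟨k, x, hx, hwev⟩ := E.word_eq_window hw
    rw [hlen] at hwev
    show w.take n ∈ E.lang ∧ (w.take n).length = n
    rw [hwev, window_take]
    exact ⟨E.window_mem hx k n, E.window_length x k n⟩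
  let Φ : {w : List (Fin m) // w ∈ E.lang ∧ w.length = n + 1} →
      {w : List (Fin m) // w ∈ E.lang ∧ w.length = n} :=
    fun u => ⟨u.val.take n, Φmem u⟩
  have hsurj : Function.Surjective Φ := by
    rintro ⟨w, hw, hlen⟩
    obtain ⟨k, x, hx, hwev⟩ := E.word_eq_window hw
    rw [hlen] at hwev
    refine ⟨⟨E.window x k (n + 1), E.window_mem hx k (n + 1), E.window_length _ _ _⟩, ?_⟩
    apply Subtype.ext
    show (E.window x k (n + 1)).take n = w
    rw [window_take, hwev]
  have hle : E.complexity n ≤ E.complexity (n + 1) :=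
    Nat.card_le_card_of_surjective Φ hsurj
  rcases lt_or_eq_of_le hle with h | h
  · exact h
  exfalso
  have hbij : Function.Bijective Φ :=
    hsurj.bijective_of_nat_card_le (le_of_eq h.symm)
  -- if `p(n) = p(n+1)`, the coding of any point of the domain is determined by
  -- its first `n` letters
  have hdet : ∀ x y, x ∈ E.domain → y ∈ E.domain →
      (∀ j, j < n → E.C x j = E.C y j) → ∀ k, E.C x k = E.C y k := by
    intro x y hx hy hinit k
    induction k using Nat.strong_induction_on with
    | _ k IH =>
      by_cases hk : k < n
      · exact hinit k hk
      push_neg at hk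
      have hkk : (k - n) + n = k := Nat.sub_add_cancel hk
      have hwin : E.window x (k - n) n = E.window y (k - n) n := by
        unfold window
        refine List.map_inj_left.mpr ?_
        intro a ha
        have ha' : a < n := List.mem_range.mp ha
        exact IH ((k - n) + a) (by omega)
      have hux : Φ ⟨E.window x (k - n) (n + 1),
            E.window_mem hx (k - n) (n + 1), E.window_length _ _ _⟩ =
          Φ ⟨E.window y (k - n) (n + 1),
            E.window_mem hy (k - n) (n + 1), E.window_length _ _ _⟩ := by
        apply Subtype.ext
        show (E.window x (k - n) (n + 1)).take n = (E.window y (k - n) (n + 1)).take n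
        rw [window_take, window_take, hwin]
      have heq := hbij.injective hux
      have hveq : E.window x (k - n) (n + 1) = E.window y (k - n) (n + 1) :=
        congrArg Subtype.val heq
      unfold window at hveq
      have hlast := List.map_inj_left.mp hveq n (List.mem_range.mpr (Nat.lt_succ_self n))
      rwa [hkk] at hlast
  -- hence the coding map takes only finitely many values on the domain
  set A := {x | x ∈ E.domain ∧ ¬ ∃ y ∈ E.domain, y ≠ x ∧ E.C y = E.C x} with hA
  have hinjA : Set.InjOn (fun x => fun j : Fin n => E.C x j) A := by
    intro x₁ h₁ x₂ h₂ heq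
    have hC : E.C x₁ = E.C x₂ := by
      funext k
      refine hdet x₁ x₂ h₁.1 h₂.1 (fun j hj => ?_) k
      exact congrFun heq ⟨j, hj⟩
    by_contra hne
    exact h₁.2 ⟨x₂, h₂.1, fun h => hne h.symm, hC.symm⟩
  have hAfin : A.Finite :=
    Set.Finite.of_finite_image (Set.finite_univ.subset (Set.subset_univ _)) hinjA
  have hA0 : volume A = 0 := hAfin.countable.measure_zero _
  have hB0 : volume {x | x ∈ E.domain ∧ ∃ y ∈ E.domain, y ≠ x ∧ E.C y = E.C x} = 0 := hconj
  have hsub : E.domain ⊆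
      A ∪ {x | x ∈ E.domain ∧ ∃ y ∈ E.domain, y ≠ x ∧ E.C y = E.C x} := by
    intro x hx
    by_cases h : ∃ y ∈ E.domain, y ≠ x ∧ E.C y = E.C x
    · exact Or.inr ⟨hx, h⟩
    · exact Or.inl ⟨hx, h⟩
  have hle0 : volume E.domain ≤ 0 := by
    calc volume E.domain
        ≤ volume (A ∪ {x | x ∈ E.domain ∧ ∃ y ∈ E.domain, y ≠ x ∧ E.C y = E.C x}) :=
          measure_mono hsub
      _ ≤ volume A + volume {x | x ∈ E.domain ∧ ∃ y ∈ E.domain, y ≠ x ∧ E.C y = E.C x} :=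
          measure_union_le _ _
      _ = 0 := by rw [hA0, hB0, add_zero]
  have h1 : volume E.domain = 1 := E.measure_union
  rw [h1] at hle0
  exact absurd hle0 (by simp)

lemma strictMono_complexity (E : PieceExchange T m) (hconj : E.Conjugate) :
    StrictMono E.complexity :=
  strictMono_nat_of_lt_succ (E.complexity_lt hconj)

lemma domain_nonempty (E : PieceExchange T m) : E.domain.Nonempty := by
  rw [Set.nonempty_iff_ne_empty]
  intro h
  have h1 : volume E.domain = 1 := E.measure_union
  rw [h] at h1
  simp at h1

lemma one_le_complexity_zero (E : PieceExchange T m) : 1 ≤ E.complexity 0 := by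
  obtain ⟨x, hx⟩ := E.domain_nonempty
  haveI := E.finite_words 0
  haveI : Nonempty {w : List (Fin m) // w ∈ E.lang ∧ w.length = 0} :=
    ⟨⟨[], ⟨0, 0, x, hx, rfl⟩, rfl⟩⟩
  exact Nat.card_pos

end PieceExchange

lemma complexityFn_succ_le {T : ℝ × ℝ → ℝ × ℝ}
    (hconj : ∀ (m : ℕ) (E : PieceExchange T m), E.Conjugate → StrictMono E.complexity)
    (n : ℕ) : complexityFn T n + 1 ≤ complexityFn T (n + 1) := by
  refine le_iInf fun m => le_iInf fun E => le_iInf fun hE => ?_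
  have h1 : complexityFn T n ≤ (E.complexity n : ℕ∞) :=
    iInf_le_of_le m (iInf_le_of_le E (iInf_le _ hE))
  calc complexityFn T n + 1 ≤ (E.complexity n : ℕ∞) + 1 := add_le_add_left h1 1
    _ ≤ (E.complexity (n + 1) : ℕ∞) := by
        have := hconj m E hE (Nat.lt_succ_self n)
        exact_mod_cast Nat.succ_le_of_lt this

/-- Let `T` be a measurable, almost surely `ℤ²`-periodic, Lebesgue-measure-
preserving map of the plane whose induced system `Tbar` on the torus is totally ergodic, and
suppose there exists an exchange of pieces conjugate to `T`.  Then the complexity function of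
every exchange of pieces conjugate to `T` is strictly increasing; consequently the complexity
function associated to `T` is strictly increasing and satisfies `p^T(n) ≥ n + 1` for `n ≥ 1`. -/
theorem complexity_strictMono_of_totallyErgodic
    (T : ℝ × ℝ → ℝ × ℝ) (hmeas : Measurable T)
    (hpres : MeasurePreserving T volume volume)
    (hper : volume {x : ℝ × ℝ | ¬ ∀ a b : ℤ, ∃ c d : ℤ,
        T (x + ((a : ℝ), (b : ℝ))) = T x + ((c : ℝ), (d : ℝ))} = 0)
    (Tbar : Torus → Torus)
    (hcompat : ∀ᵐ x ∂(volume : Measure (ℝ × ℝ)), torusProj (T x) = Tbar (torusProj x))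
    (htot : ∀ k : ℕ, 1 ≤ k → Ergodic (Tbar^[k]) volume)
    (hex : ∃ (m : ℕ) (E : PieceExchange T m), E.Conjugate) :
    (∀ (m : ℕ) (E : PieceExchange T m), E.Conjugate → StrictMono E.complexity) ∧
    StrictMono (complexityFn T) ∧
    (∀ n : ℕ, 1 ≤ n → (n + 1 : ℕ∞) ≤ complexityFn T n) := by
  have hsm : ∀ (m : ℕ) (E : PieceExchange T m), E.Conjugate → StrictMono E.complexity :=
    fun m E hE => E.strictMono_complexity hE
  have hkey := complexityFn_succ_le hsm
  obtain ⟨m₀, E₀, hE₀⟩ := hex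
  have htop : ∀ n : ℕ, complexityFn T n < ⊤ := by
    intro n
    have : complexityFn T n ≤ (E₀.complexity n : ℕ∞) :=
      iInf_le_of_le m₀ (iInf_le_of_le E₀ (iInf_le _ hE₀))
    exact lt_of_le_of_lt this (WithTop.coe_lt_top _)
  refine ⟨hsm, ?_, ?_⟩
  · refine strictMono_nat_of_lt_succ fun n => ?_
    have hlt : complexityFn T n < complexityFn T n + 1 :=
      ENat.lt_add_one_iff (htop n).ne |>.mpr le_rfl
    exact lt_of_lt_of_le hlt (hkey n)
  · have hall : ∀ n : ℕ, (n + 1 : ℕ∞) ≤ complexityFn T n := by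
      intro n
      induction n with
      | zero =>
          refine le_iInf fun m => le_iInf fun E => le_iInf fun hE => ?_
          have := E.one_le_complexity_zero
          simpa using (Nat.cast_le (α := ℕ∞)).mpr this
      | succ k ih =>
          calc ((k : ℕ∞) + 1) + 1 ≤ complexityFn T k + 1 := add_le_add_left ih 1
            _ ≤ complexityFn T (k + 1) := hkey k
    intro n _
    exact hall n

end
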